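/- arXiv:2210.16977 — 2 statements merged into one kernel-verified Lean document; each statement's English description precedes it below -/
import Mathlib

section
/- Let ℓ ≥ 17 be a prime with ℓ ≠ 23, let e ∈ {1,2,3,4,6}, and let M ∈ GL₂(F_ℓ) be such that M D^e M⁻¹ ⊆ N_s(ℓ), where D^e = { diag(a^e,1) : a ∈ F_ℓ^× }. Then M D^e M⁻¹ = D^e or M D^e M⁻¹ = (D^e)_f, where (D^e)_f = { diag(1, a^e) : a ∈ F_ℓ^× }. -/
open Matrix

/-- The e-th power of the semi-Cartan subgroup, as a subset of GL₂. -/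
def DeSet (ℓ e : ℕ) : Set (GL (Fin 2) (ZMod ℓ)) :=
  {A | ∃ a : (ZMod ℓ)ˣ,
    (A : Matrix (Fin 2) (Fin 2) (ZMod ℓ)) = !![(a : ZMod ℓ) ^ e, 0; 0, 1]}

/-- The "flip" of the e-th power of the semi-Cartan subgroup. -/
def DeFlipSet (ℓ e : ℕ) : Set (GL (Fin 2) (ZMod ℓ)) :=
  {A | ∃ a : (ZMod ℓ)ˣ,
    (A : Matrix (Fin 2) (Fin 2) (ZMod ℓ)) = !![1, 0; 0, (a : ZMod ℓ) ^ e]}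

/-- The normalizer of the split Cartan subgroup: diagonal and antidiagonal matrices. -/
def NsGL (ℓ : ℕ) : Set (GL (Fin 2) (ZMod ℓ)) :=
  {A | ((A : Matrix (Fin 2) (Fin 2) (ZMod ℓ)) 0 1 = 0 ∧
        (A : Matrix (Fin 2) (Fin 2) (ZMod ℓ)) 1 0 = 0) ∨
       ((A : Matrix (Fin 2) (Fin 2) (ZMod ℓ)) 0 0 = 0 ∧
        (A : Matrix (Fin 2) (Fin 2) (ZMod ℓ)) 1 1 = 0)}

/-- The diagonal unit diag(a^e, 1). -/
def dUnit (ℓ : ℕ) (a : (ZMod ℓ)ˣ) (e : ℕ) : GL (Fin 2) (ZMod ℓ) :=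
  ⟨!![(a : ZMod ℓ) ^ e, 0; 0, 1], !![((a⁻¹ : (ZMod ℓ)ˣ) : ZMod ℓ) ^ e, 0; 0, 1],
   by rw [Matrix.mul_fin_two, ← mul_pow, ← Units.val_mul, mul_inv_cancel]
      simp
      exact Matrix.one_fin_two.symm,
   by rw [Matrix.mul_fin_two, ← mul_pow, ← Units.val_mul, inv_mul_cancel]
      simp
      exact Matrix.one_fin_two.symm⟩

lemma dUnit_mem (ℓ : ℕ) (a : (ZMod ℓ)ˣ) (e : ℕ) : dUnit ℓ a e ∈ DeSet ℓ e := ⟨a, rfl⟩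

lemma dUnit_coe (ℓ : ℕ) (a : (ZMod ℓ)ˣ) (e : ℕ) :
    (dUnit ℓ a e : Matrix (Fin 2) (Fin 2) (ZMod ℓ)) = !![(a : ZMod ℓ) ^ e, 0; 0, 1] := rfl

theorem stmt12 (ℓ e : ℕ) (hp : ℓ.Prime) (h17 : 17 ≤ ℓ) (h23 : ℓ ≠ 23)
    (he : e ∈ ({1, 2, 3, 4, 6} : Set ℕ)) (M : GL (Fin 2) (ZMod ℓ))
    (hconj : (fun A => M * A * M⁻¹) '' DeSet ℓ e ⊆ NsGL ℓ) :
    (fun A => M * A * M⁻¹) '' DeSet ℓ e = DeSet ℓ e ∨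
    (fun A => M * A * M⁻¹) '' DeSet ℓ e = DeFlipSet ℓ e := by
  haveI : Fact ℓ.Prime := ⟨hp⟩
  have he' : 1 ≤ e ∧ e ≤ 6 := by
    simp only [Set.mem_insert_iff, Set.mem_singleton_iff] at he
    rcases he with rfl|rfl|rfl|rfl|rfl <;> norm_num
  obtain ⟨g, hg⟩ := IsCyclic.exists_generator (α := (ZMod ℓ)ˣ)
  have hog : orderOf g = ℓ - 1 := by
    rw [orderOf_eq_card_of_forall_mem_zpowers hg, Nat.card_eq_fintype_card, ZMod.card_units]
  have h2e : g ^ (2 * e) ≠ 1 := by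
    intro h
    have := Nat.le_of_dvd (by omega) (hog ▸ orderOf_dvd_of_pow_eq_one h)
    omega
  set t : ZMod ℓ := (g : ZMod ℓ) ^ e with ht
  have ht2 : t * t ≠ 1 := by
    intro h
    apply h2e
    apply Units.ext
    push_cast
    rw [two_mul, pow_add, ← h]
  have ht1 : t ≠ 1 := fun h => ht2 (by rw [h, mul_one])
  set A0 := dUnit ℓ g e with hA0
  have hmem : (fun A => M * A * M⁻¹) A0 ∈ NsGL ℓ := hconj ⟨A0, dUnit_mem ℓ g e, rfl⟩
  set P : Matrix (Fin 2) (Fin 2) (ZMod ℓ) := (M : Matrix (Fin 2) (Fin 2) (ZMod ℓ)) with hP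
  set B : Matrix (Fin 2) (Fin 2) (ZMod ℓ) := ((M * A0 * M⁻¹ : GL (Fin 2) (ZMod ℓ)) : Matrix (Fin 2) (Fin 2) (ZMod ℓ)) with hB
  have hkey : B * P = P * !![t, 0; 0, 1] := by
    have h1 := congrArg Units.val (inv_mul_cancel_right (M * A0) M)
    simp only [Units.val_mul] at h1
    exact h1
  have hdet : P.det ≠ 0 := by
    have : IsUnit P.det := (Matrix.isUnit_iff_isUnit_det P).mp ⟨M, rfl⟩
    exact this.ne_zero
  rw [Matrix.det_fin_two] at hdet
  have h00 := congrFun (congrFun hkey 0) 0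
  have h01 := congrFun (congrFun hkey 0) 1
  have h10 := congrFun (congrFun hkey 1) 0
  have h11 := congrFun (congrFun hkey 1) 1
  simp [Matrix.mul_apply, Fin.sum_univ_two] at h00 h01 h10 h11
  have hM : (P 0 1 = 0 ∧ P 1 0 = 0) ∨ (P 0 0 = 0 ∧ P 1 1 = 0) := by
    rcases hmem with ⟨hb01, hb10⟩ | ⟨hb00, hb11⟩
    · -- B diagonal
      replace hb01 : B 0 1 = 0 := hb01
      replace hb10 : B 1 0 = 0 := hb10
      rw [hb01] at h01
      rw [hb10] at h10
      rw [hb01] at h00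
      rw [hb10] at h11
      simp only [zero_mul, add_zero, zero_add, mul_zero] at h00 h01 h10 h11
      have hrow0 : P 0 0 = 0 ∨ P 0 1 = 0 := by
        by_contra hc
        push_neg at hc
        have e1 : B 0 0 = t := mul_left_cancel₀ hc.1 (by linear_combination h00)
        have e2 : B 0 0 = 1 := mul_left_cancel₀ hc.2 (by linear_combination h01)
        exact ht1 (e1 ▸ e2)
      have hrow1 : P 1 0 = 0 ∨ P 1 1 = 0 := by
        by_contra hc
        push_neg at hc
        have e1 : B 1 1 = t := mul_left_cancel₀ hc.1 (by linear_combination h10)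
        have e2 : B 1 1 = 1 := mul_left_cancel₀ hc.2 (by linear_combination h11)
        exact ht1 (e1 ▸ e2)
      rcases hrow0 with h|h <;> rcases hrow1 with h'|h'
      · exact absurd (by rw [h, h']; ring) hdet
      · exact Or.inr ⟨h, h'⟩
      · exact Or.inl ⟨h, h'⟩
      · exact absurd (by rw [h, h']; ring) hdet
    · -- B antidiagonal: impossible
      exfalso
      replace hb00 : B 0 0 = 0 := hb00
      replace hb11 : B 1 1 = 0 := hb11
      rw [hb00] at h00 h01
      rw [hb11] at h10 h11
      simp only [zero_mul, add_zero, zero_add, mul_zero] at h00 h01 h10 h11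
      set c := B 0 1 * B 1 0 with hc
      have e0 : P 0 0 * (t * t) = P 0 0 * c := by linear_combination -t * h00 - B 0 1 * h10
      have e1 : P 0 1 * 1 = P 0 1 * c := by linear_combination -h01 - B 0 1 * h11
      have e2 : P 1 0 * (t * t) = P 1 0 * c := by linear_combination -t * h10 - B 1 0 * h00
      have e3 : P 1 1 * 1 = P 1 1 * c := by linear_combination -h11 - B 1 0 * h01
      have hc1 : t * t = c := by
        by_cases h0 : P 0 0 = 0
        · by_cases h1 : P 1 0 = 0
          · exact absurd (by rw [h0, h1]; ring) hdet
          · exact mul_left_cancel₀ h1 e2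
        · exact mul_left_cancel₀ h0 e0
      have hc2 : (1 : ZMod ℓ) = c := by
        by_cases h0 : P 0 1 = 0
        · by_cases h1 : P 1 1 = 0
          · exact absurd (by rw [h0, h1]; ring) hdet
          · exact mul_left_cancel₀ h1 e3
        · exact mul_left_cancel₀ h0 e1
      exact ht2 (hc1.trans hc2.symm)
  clear hkey h00 h01 h10 h11 hmem hconj
  rcases hM with ⟨hq, hr⟩ | ⟨hzp, hzs⟩
  · -- M diagonal : image = DeSet
    left
    have hfix : ∀ A ∈ DeSet ℓ e, M * A * M⁻¹ = A := by
      rintro A ⟨a, ha⟩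
      apply Units.ext
      have hcomm : P * (A : Matrix (Fin 2) (Fin 2) (ZMod ℓ)) =
          (A : Matrix (Fin 2) (Fin 2) (ZMod ℓ)) * P := by
        rw [ha]
        ext i j
        fin_cases i <;> fin_cases j <;>
          simp [Matrix.mul_apply, Fin.sum_univ_two, hq, hr, mul_comm]
      show ((M * A * M⁻¹ : GL (Fin 2) (ZMod ℓ)) : Matrix (Fin 2) (Fin 2) (ZMod ℓ)) = A
      rw [Units.val_mul, Units.val_mul, ← hP, hcomm, mul_assoc, Units.mul_inv, mul_one]
    ext X
    constructor
    · rintro ⟨A, hA, rfl⟩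
      show M * A * M⁻¹ ∈ DeSet ℓ e
      rw [hfix A hA]; exact hA
    · intro hX
      exact ⟨X, hX, hfix X hX⟩
  · -- M antidiagonal : image = DeFlipSet
    right
    have hswap : ∀ x : ZMod ℓ, P * !![x, 0; 0, 1] = !![1, 0; 0, x] * P := by
      intro x
      ext i j
      fin_cases i <;> fin_cases j <;>
        simp [Matrix.mul_apply, Fin.sum_univ_two, hzp, hzs, mul_comm]
    have hcoe : ∀ (A : GL (Fin 2) (ZMod ℓ)) (x : ZMod ℓ),
        (A : Matrix (Fin 2) (Fin 2) (ZMod ℓ)) = !![x, 0; 0, 1] →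
        ((M * A * M⁻¹ : GL (Fin 2) (ZMod ℓ)) : Matrix (Fin 2) (Fin 2) (ZMod ℓ)) =
          !![1, 0; 0, x] := by
      intro A x hA
      rw [Units.val_mul, Units.val_mul, ← hP, hA, hswap, mul_assoc, Units.mul_inv, mul_one]
    ext X
    constructor
    · rintro ⟨A, ⟨a, ha⟩, rfl⟩
      exact ⟨a, hcoe A _ ha⟩
    · rintro ⟨a, ha⟩
      refine ⟨dUnit ℓ a e, dUnit_mem ℓ a e, ?_⟩
      show M * dUnit ℓ a e * M⁻¹ = X
      apply Units.ext
      rw [hcoe (dUnit ℓ a e) _ (dUnit_coe ℓ a e), ha]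
end

section
/- Let F₀ ⊆ L be fields with L/F₀ algebraic, let E be an elliptic curve over F₀, and suppose ℓ is a prime and n ≥ 1 an integer such that E(L)[ℓ^k] = E(F₀)[ℓ^k] for all k < n. If R ∈ E(L) is a point of exact order ℓⁿ and [L : F₀] is coprime to ℓ(ℓ−1), then R ∈ E(F₀). (Here one uses that [F₀(R) : F₀(ℓR)] divides ℓ² or ℓ(ℓ−1).) -/
open WeierstrassCurve WeierstrassCurve.Affine WeierstrassCurve.Affine.Point

/-- The field of definition `F₀(R)` of a rational point `R` on a Weierstrass curve
base-changed to `L`: the intermediate field of `L/F₀` generated by its coordinates. -/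
noncomputable def fieldOfDef {F₀ L : Type*} [Field F₀] [Field L] [Algebra F₀ L]
    {W : WeierstrassCurve F₀} : (W⁄L).Point → IntermediateField F₀ L
  | .zero => ⊥
  | .some (x := x) (y := y) _ => IntermediateField.adjoin F₀ {x, y}

open Classical in
lemma fieldOfDef_eq_bot_of_map {F₀ L : Type*} [Field F₀] [Field L] [Algebra F₀ L]
    {W : WeierstrassCurve F₀} (Q : (W⁄F₀).Point) :
    fieldOfDef (Point.map (W' := W) (Algebra.ofId F₀ L) Q) = ⊥ := by
  cases Q with
  | zero => rfl
  | some h =>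
    show IntermediateField.adjoin F₀ _ = ⊥
    rw [← le_bot_iff, IntermediateField.adjoin_le_iff]
    rintro z (rfl | rfl) <;>
      exact IntermediateField.algebraMap_mem ⊥ _

open Classical in
lemma exists_of_fieldOfDef_eq_bot {F₀ L : Type*} [Field F₀] [Field L] [Algebra F₀ L]
    {W : WeierstrassCurve F₀} (P : (W⁄L).Point) (hP : fieldOfDef P = ⊥) :
    ∃ Q : (W⁄F₀).Point, Point.map (W' := W) (Algebra.ofId F₀ L) Q = P := by
  cases P with
  | zero => exact ⟨0, rfl⟩
  | some x y h =>
    have hx : x ∈ (⊥ : IntermediateField F₀ L) := by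
      rw [← hP]; exact IntermediateField.subset_adjoin _ _ (by simp)
    have hy : y ∈ (⊥ : IntermediateField F₀ L) := by
      rw [← hP]; exact IntermediateField.subset_adjoin _ _ (by simp)
    rw [IntermediateField.mem_bot] at hx hy
    obtain ⟨x₀, rfl⟩ := hx
    obtain ⟨y₀, rfl⟩ := hy
    exact ⟨Point.some _ _ ((baseChange_nonsingular (W := W) (Algebra.ofId F₀ L).injective x₀ y₀).mp h), rfl⟩

open Classical in
theorem stmt19 {F₀ L : Type*} [Field F₀] [Field L] [Algebra F₀ L] [CharZero F₀]
    [FiniteDimensional F₀ L]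
    (W : WeierstrassCurve F₀) [W.IsElliptic]
    (ℓ n : ℕ) (hℓ : ℓ.Prime) (hn : 1 ≤ n)
    (hIH : ∀ k < n, ∀ P : (W⁄L).Point, ℓ ^ k • P = 0 →
      ∃ Q : (W⁄F₀).Point, Point.map (W' := W) (Algebra.ofId F₀ L) Q = P)
    (R : (W⁄L).Point) (hR : addOrderOf R = ℓ ^ n)
    (hdeg : ∃ m : ℕ, (m ∣ ℓ ^ 2 ∨ m ∣ ℓ * (ℓ - 1)) ∧
      Module.finrank F₀ (fieldOfDef R) = m * Module.finrank F₀ (fieldOfDef (ℓ • R)))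
    (hcop : Nat.Coprime (Module.finrank F₀ L) (ℓ * (ℓ - 1))) :
    ∃ Q : (W⁄F₀).Point, Point.map (W' := W) (Algebra.ofId F₀ L) Q = R := by
  obtain ⟨m, hm, hrank⟩ := hdeg
  -- ℓ • R is killed by ℓ ^ (n - 1)
  have hkill : ℓ ^ (n - 1) • (ℓ • R) = 0 := by
    rw [smul_smul, ← pow_succ, Nat.sub_add_cancel hn, ← hR]
    exact addOrderOf_nsmul_eq_zero R
  obtain ⟨Q, hQ⟩ := hIH (n - 1) (by omega) (ℓ • R) hkill
  have hbot : fieldOfDef (ℓ • R) = ⊥ := hQ ▸ fieldOfDef_eq_bot_of_map Q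
  have h1 : Module.finrank F₀ (fieldOfDef (ℓ • R)) = 1 :=
    IntermediateField.finrank_eq_one_iff.mpr hbot
  rw [h1, mul_one] at hrank
  -- finrank of fieldOfDef R divides finrank of L
  have hdvd : Module.finrank F₀ (fieldOfDef R) ∣ Module.finrank F₀ L :=
    ⟨Module.finrank (fieldOfDef R) L, (Module.finrank_mul_finrank F₀ (fieldOfDef R) L).symm⟩
  rw [hrank] at hdvd
  have hmc : Nat.Coprime m (ℓ * (ℓ - 1)) := Nat.Coprime.coprime_dvd_left hdvd hcop
  have hm1 : m = 1 := by
    rcases hm with hm | hm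
    · have : Nat.Coprime m ℓ := Nat.Coprime.coprime_dvd_right (dvd_mul_right _ _) hmc
      exact Nat.Coprime.eq_one_of_dvd (this.pow_right 2) hm
    · exact Nat.Coprime.eq_one_of_dvd hmc hm
  rw [hm1] at hrank
  exact exists_of_fieldOfDef_eq_bot R (IntermediateField.finrank_eq_one_iff.mp hrank)
end
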